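/- arXiv:2304.09672 — 2 statements merged into one kernel-verified Lean document; each statement's English description precedes it below -/
import Mathlib

section
/- Let s ≥ 1 be an integer, c_1 < … < c_s be s distinct real numbers, and A the coefficient matrix of the associated Runge–Kutta collocation method. Then 0 is an eigenvalue of A if and only if there exists j ∈ {1, …, s} such that c_j = 0, which in turn holds if and only if 0 is a root of τ(π). -/
open Polynomial Matrix MeasureTheory

noncomputable section

/-- Lagrange basis function `ℓ_i(t) = ∏_{j≠i} (t - c_j)/(c_i - c_j)`. -/
def lagrangeFun (s : ℕ) (c : Fin s → ℝ) (i : Fin s) (t : ℝ) : ℝ :=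
  ∏ j ∈ Finset.univ.erase i, (t - c j) / (c i - c j)

/-- Coefficient matrix `A` of the collocation method: `a_{ij} = ∫_0^{c_i} ℓ_j`. -/
def collocA (s : ℕ) (c : Fin s → ℝ) : Matrix (Fin s) (Fin s) ℝ :=
  Matrix.of fun i j => ∫ t in (0:ℝ)..(c i), lagrangeFun s c j t

/-- Weight vector `b` of the collocation method: `b_i = ∫_0^1 ℓ_i`. -/
def collocB (s : ℕ) (c : Fin s → ℝ) : Fin s → ℝ :=
  fun i => ∫ t in (0:ℝ)..(1:ℝ), lagrangeFun s c i t

/-- `π = ∏ (X - c_i)`. -/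
def piPoly (s : ℕ) (c : Fin s → ℝ) : Polynomial ℝ :=
  ∏ i : Fin s, (Polynomial.X - Polynomial.C (c i))

/-- The linear map `τ` sending `Σ a_k X^k` to `Σ k! a_k X^k`. -/
def tauP (p : Polynomial ℝ) : Polynomial ℝ :=
  ∑ k ∈ p.support, Polynomial.C ((k.factorial : ℝ) * p.coeff k) * Polynomial.X ^ k

/-- The matrix `A` viewed as a complex matrix. -/
def collocAC (s : ℕ) (c : Fin s → ℝ) : Matrix (Fin s) (Fin s) ℂ :=
  (collocA s c).map (fun x => (x : ℂ))

/-- The weight vector `b` viewed as a complex vector. -/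
def collocBC (s : ℕ) (c : Fin s → ℝ) : Fin s → ℂ :=
  fun i => (collocB s c i : ℂ)

/-- The linear stability function `R(λ) = 1 + λ bᵀ (I - λ A)⁻¹ 𝟙`. -/
def stabR (s : ℕ) (c : Fin s → ℝ) (lam : ℂ) : ℂ :=
  1 + lam * (collocBC s c ⬝ᵥ ((1 - lam • collocAC s c)⁻¹ *ᵥ (fun _ => 1)))

/-- A-stability: `|R(λ)| ≤ 1` on the closed left half-plane (where defined). -/
def AStable (s : ℕ) (c : Fin s → ℝ) : Prop :=
  ∀ lam : ℂ, lam.re ≤ 0 → IsUnit (1 - lam • collocAC s c).det →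
    ‖stabR s c lam‖ ≤ 1

/-- I-stability: `|R(λ)| ≤ 1` on the imaginary axis (where defined). -/
def IStable (s : ℕ) (c : Fin s → ℝ) : Prop :=
  ∀ lam : ℂ, lam.re = 0 → IsUnit (1 - lam • collocAC s c).det →
    ‖stabR s c lam‖ ≤ 1

/-- AS-stability: `I - λA` invertible on `ℂ⁻` and `λ bᵀ (I - λA)⁻¹` uniformly bounded there. -/
def ASStable (s : ℕ) (c : Fin s → ℝ) : Prop :=
  (∀ lam : ℂ, lam.re ≤ 0 → IsUnit (1 - lam • collocAC s c).det) ∧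
  ∃ M : ℝ, ∀ lam : ℂ, lam.re ≤ 0 → ∀ j,
    ‖lam * (collocBC s c ᵥ* (1 - lam • collocAC s c)⁻¹) j‖ ≤ M

/-- ASI-stability: `I - λA` invertible on `ℂ⁻` and `(I - λA)⁻¹` uniformly bounded there. -/
def ASIStable (s : ℕ) (c : Fin s → ℝ) : Prop :=
  (∀ lam : ℂ, lam.re ≤ 0 → IsUnit (1 - lam • collocAC s c).det) ∧
  ∃ M : ℝ, ∀ lam : ℂ, lam.re ≤ 0 → ∀ i j,
    ‖(1 - lam • collocAC s c)⁻¹ i j‖ ≤ M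

/-- IS-stability: `I - λA` invertible on `iℝ` and `λ bᵀ (I - λA)⁻¹` uniformly bounded there. -/
def ISStable (s : ℕ) (c : Fin s → ℝ) : Prop :=
  (∀ lam : ℂ, lam.re = 0 → IsUnit (1 - lam • collocAC s c).det) ∧
  ∃ M : ℝ, ∀ lam : ℂ, lam.re = 0 → ∀ j,
    ‖lam * (collocBC s c ᵥ* (1 - lam • collocAC s c)⁻¹) j‖ ≤ M

/-- ISI-stability: `I - λA` invertible on `iℝ` and `(I - λA)⁻¹` uniformly bounded there. -/
def ISIStable (s : ℕ) (c : Fin s → ℝ) : Prop :=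
  (∀ lam : ℂ, lam.re = 0 → IsUnit (1 - lam • collocAC s c).det) ∧
  ∃ M : ℝ, ∀ lam : ℂ, lam.re = 0 → ∀ i j,
    ‖(1 - lam • collocAC s c)⁻¹ i j‖ ≤ M

end

section Aux

open Finset

lemma lagrangeFun_eq_eval (s : ℕ) (c : Fin s → ℝ) (i : Fin s) (t : ℝ) :
    lagrangeFun s c i t = (Lagrange.basis Finset.univ c i).eval t := by
  rw [Lagrange.basis, Polynomial.eval_prod, lagrangeFun]
  refine Finset.prod_congr rfl fun j _ => ?_
  rw [Lagrange.basisDivisor]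
  simp [div_eq_inv_mul]

lemma lagrangeFun_continuous (s : ℕ) (c : Fin s → ℝ) (i : Fin s) :
    Continuous (lagrangeFun s c i) := by
  unfold lagrangeFun
  exact continuous_finset_prod _ fun j _ =>
    (continuous_id.sub continuous_const).div_const _

lemma lagrange_sum_pow (s : ℕ) (c : Fin s → ℝ) (hc : StrictMono c) (k : Fin s) (t : ℝ) :
    ∑ j : Fin s, lagrangeFun s c j t * c j ^ (k : ℕ) = t ^ (k : ℕ) := by
  have hinj : Set.InjOn c (Finset.univ : Finset (Fin s)) := hc.injective.injOn
  have hdeg : ((Polynomial.X : Polynomial ℝ) ^ (k : ℕ)).degree <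
      (Finset.univ : Finset (Fin s)).card := by
    rw [Polynomial.degree_X_pow, Finset.card_univ, Fintype.card_fin]
    exact_mod_cast k.isLt
  have h := Lagrange.eq_interpolate (v := c) hinj hdeg
  have := congrArg (Polynomial.eval t) h
  rw [Polynomial.eval_pow, Polynomial.eval_X, Lagrange.interpolate_apply,
    Polynomial.eval_finset_sum] at this
  rw [this]
  refine Finset.sum_congr rfl fun j _ => ?_
  rw [Polynomial.eval_mul, Polynomial.eval_C, lagrangeFun_eq_eval]
  simp [mul_comm]

lemma collocA_mul_vandermonde (s : ℕ) (c : Fin s → ℝ) (hc : StrictMono c) :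
    collocA s c * Matrix.vandermonde c =
      Matrix.diagonal c * Matrix.vandermonde c *
        Matrix.diagonal (fun k : Fin s => (((k : ℕ) + 1 : ℝ))⁻¹) := by
  ext i k
  rw [Matrix.mul_diagonal, Matrix.mul_apply]
  have h1 : ∀ j : Fin s, collocA s c i j * Matrix.vandermonde c j k =
      ∫ t in (0:ℝ)..(c i), lagrangeFun s c j t * c j ^ (k : ℕ) := by
    intro j
    rw [collocA, Matrix.of_apply, Matrix.vandermonde_apply,
      ← intervalIntegral.integral_mul_const]
  rw [Finset.sum_congr rfl fun j _ => h1 j,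
    ← intervalIntegral.integral_finset_sum (f := fun j t => lagrangeFun s c j t * c j ^ (k : ℕ)) (fun j _ =>
      (((lagrangeFun_continuous s c j).mul continuous_const).intervalIntegrable _ _))]
  have h2 : ∀ t : ℝ, ∑ j : Fin s, lagrangeFun s c j t * c j ^ (k : ℕ) = t ^ (k : ℕ) :=
    lagrange_sum_pow s c hc k
  rw [intervalIntegral.integral_congr (fun t _ => h2 t), integral_pow]
  rw [Matrix.diagonal_mul, Matrix.vandermonde_apply]
  rw [zero_pow (Nat.succ_ne_zero _), sub_zero, div_eq_mul_inv, pow_succ]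
  push_cast
  ring

lemma collocA_det (s : ℕ) (c : Fin s → ℝ) (hc : StrictMono c) :
    (collocA s c).det =
      (∏ i : Fin s, c i) * ∏ k : Fin s, (((k : ℕ) + 1 : ℝ))⁻¹ := by
  have hV : (Matrix.vandermonde c).det ≠ 0 :=
    Matrix.det_vandermonde_ne_zero_iff.mpr hc.injective
  have h := congrArg Matrix.det (collocA_mul_vandermonde s c hc)
  rw [Matrix.det_mul, Matrix.det_mul, Matrix.det_mul, Matrix.det_diagonal,
    Matrix.det_diagonal] at h
  have h' : (collocA s c).det * (Matrix.vandermonde c).det =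
      ((∏ i : Fin s, c i) * ∏ k : Fin s, (((k : ℕ) + 1 : ℝ))⁻¹) *
        (Matrix.vandermonde c).det := by rw [h]; ring
  exact mul_right_cancel₀ hV h'

end Aux

/-- `0` is an eigenvalue of `A` iff some `c_j = 0`, iff `0` is a root of `τ(π)`. -/
theorem zero_eigenvalue_iff (s : ℕ) (hs : 1 ≤ s) (c : Fin s → ℝ) (hc : StrictMono c) :
    (Module.End.HasEigenvalue (Matrix.toLin' (collocA s c)) 0 ↔ ∃ j, c j = 0) ∧
    ((∃ j, c j = 0) ↔ (tauP (piPoly s c)).IsRoot 0) := by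
  constructor
  · -- eigenvalue part
    have hdet : (collocA s c).det = 0 ↔ ∃ j, c j = 0 := by
      rw [collocA_det s c hc]
      have hne : (∏ k : Fin s, (((k : ℕ) + 1 : ℝ))⁻¹) ≠ 0 := by
        refine Finset.prod_ne_zero_iff.mpr fun k _ => ?_
        positivity
      rw [mul_eq_zero, or_iff_left hne, Finset.prod_eq_zero_iff]
      simp
    rw [← hdet]
    rw [Module.End.hasEigenvalue_iff, Module.End.eigenspace_zero,
      Submodule.ne_bot_iff, ← Matrix.exists_mulVec_eq_zero_iff]
    constructor
    · rintro ⟨v, hv, hv0⟩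
      exact ⟨v, hv0, by simpa [Matrix.toLin'_apply] using hv⟩
    · rintro ⟨v, hv0, hv⟩
      exact ⟨v, by simpa [Matrix.toLin'_apply] using hv, hv0⟩
  · -- tau part
    have heval : (tauP (piPoly s c)).eval 0 = (piPoly s c).coeff 0 := by
      rw [tauP, Polynomial.eval_finset_sum]
      have h1 : ∀ k ∈ (piPoly s c).support,
          (Polynomial.C ((k.factorial : ℝ) * (piPoly s c).coeff k) *
            Polynomial.X ^ k).eval 0 =
          if k = 0 then (piPoly s c).coeff 0 else 0 := by
        intro k _
        rcases eq_or_ne k 0 with rfl | hk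
        · simp
        · simp [zero_pow hk, hk]
      rw [Finset.sum_congr rfl h1, Finset.sum_ite_eq' (piPoly s c).support 0
        (fun _ => (piPoly s c).coeff 0)]
      split_ifs with h
      · rfl
      · rw [Polynomial.notMem_support_iff.mp h]
    have hcoeff : (piPoly s c).coeff 0 = ∏ i : Fin s, (-(c i)) := by
      rw [Polynomial.coeff_zero_eq_eval_zero, piPoly, Polynomial.eval_prod]
      refine Finset.prod_congr rfl fun i _ => ?_
      simp
    rw [Polynomial.IsRoot, heval, hcoeff, Finset.prod_eq_zero_iff]
    simp
end

section
/- Let s ≥ 1 be an integer, c_1 < … < c_s be s distinct real numbers, and (A, b) the coefficients of the associated Runge–Kutta collocation method with linear stability function R(λ) = 1 + λ bᵀ (I − λA)^{-1} 𝟙. Then for every λ ∈ ℂ with Re(λ) > 0 such that I − λA is invertible and ∫_0^{+∞} e^{−λσ} π(σ) dσ ≠ 0, one has R(λ) = (∫_0^{+∞} e^{−λσ} π(σ+1) dσ) / (∫_0^{+∞} e^{−λσ} π(σ) dσ). -/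
open Polynomial Matrix MeasureTheory

section AuxStab
open Polynomial MeasureTheory Set Filter

lemma integrableOn_pow_exp (b : ℝ) (hb : 0 < b) (k : ℕ) :
    IntegrableOn (fun x : ℝ => x ^ k * Real.exp (-b * x)) (Ioi 0) := by
  have h := integrableOn_rpow_mul_exp_neg_mul_rpow (p := 1) (s := (k:ℝ)) (b := b)
    (lt_of_lt_of_le (by norm_num) (Nat.cast_nonneg k)) zero_lt_one hb
  apply h.congr_fun ?_ measurableSet_Ioi
  intro x hx
  rw [mem_Ioi] at hx
  simp only [Real.rpow_natCast, Real.rpow_one]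

lemma integrableOn_cexp_pow (lam : ℂ) (hre : 0 < lam.re) (k : ℕ) :
    IntegrableOn (fun σ : ℝ => Complex.exp (-lam * σ) * (σ:ℂ) ^ k) (Ioi 0) := by
  have hmeas : MeasureTheory.AEStronglyMeasurable
      (fun σ : ℝ => Complex.exp (-lam * σ) * (σ:ℂ) ^ k) (volume.restrict (Ioi 0)) := by
    apply Continuous.aestronglyMeasurable
    continuity
  refine Integrable.mono' ((integrableOn_pow_exp lam.re hre k).congr_fun
    (fun x hx => mul_comm _ _) measurableSet_Ioi) hmeas ?_
  filter_upwards [MeasureTheory.ae_restrict_mem measurableSet_Ioi] with x hx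
  rw [mem_Ioi] at hx
  rw [norm_mul, Complex.norm_exp, norm_pow, Complex.norm_real,
    Real.norm_eq_abs, abs_of_pos hx]
  have : (-lam * ↑x).re = -(lam.re * x) := by simp [Complex.mul_re]
  rw [this, neg_mul]

lemma tendsto_cexp_pow (lam : ℂ) (hre : 0 < lam.re) (k : ℕ) :
    Tendsto (fun x : ℝ => Complex.exp (-lam * x) * (x:ℂ) ^ k) atTop (nhds 0) := by
  rw [tendsto_zero_iff_norm_tendsto_zero]
  have h := tendsto_rpow_mul_exp_neg_mul_atTop_nhds_zero (k:ℝ) lam.re hre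
  apply h.congr'
  filter_upwards [eventually_gt_atTop 0] with x hx
  rw [norm_mul, Complex.norm_exp, norm_pow, Complex.norm_real,
    Real.norm_eq_abs, abs_of_pos hx]
  have : (-lam * ↑x).re = -(lam.re * x) := by simp [Complex.mul_re]
  rw [this, Real.rpow_natCast, mul_comm]
  rw [neg_mul]

lemma hasDerivAt_cexp_real (lam : ℂ) (x : ℝ) :
    HasDerivAt (fun y : ℝ => Complex.exp (-lam * y)) (-lam * Complex.exp (-lam * x)) x := by
  have h1 : HasDerivAt (fun z : ℂ => Complex.exp (-lam * z)) (-lam * Complex.exp (-lam * x)) (x:ℂ) := by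
    simpa [mul_comm] using (((hasDerivAt_id (x:ℂ)).const_mul (-lam)).cexp)
  exact h1.comp_ofReal

lemma hasDerivAt_aux (lam : ℂ) (hlam : lam ≠ 0) (k : ℕ) (x : ℝ) :
    HasDerivAt (fun y : ℝ => -lam⁻¹ * (Complex.exp (-lam * y) * (y:ℂ) ^ (k+1)))
      (Complex.exp (-lam * x) * (x:ℂ) ^ (k+1)
        - ((k:ℂ)+1) / lam * (Complex.exp (-lam * x) * (x:ℂ) ^ k)) x := by
  have hp : HasDerivAt (fun y : ℝ => ((y:ℂ)) ^ (k+1)) (((k:ℂ)+1) * (x:ℂ) ^ k) x := by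
    have := (hasDerivAt_pow (k+1) (x:ℂ)).comp_ofReal
    simpa using this
  have h := ((hasDerivAt_cexp_real lam x).mul hp).const_mul (-lam⁻¹)
  exact h.congr_deriv (by linear_combination (Complex.exp (-lam * x) * (x:ℂ) ^ (k+1)) * inv_mul_cancel₀ hlam)

lemma integral_cexp_pow (lam : ℂ) (hre : 0 < lam.re) (k : ℕ) :
    ∫ σ in Ioi (0:ℝ), Complex.exp (-lam * σ) * (σ:ℂ) ^ k = (k.factorial : ℂ) / lam ^ (k+1) := by
  have hlam : lam ≠ 0 := fun h => by simp [h] at hre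
  induction k with
  | zero =>
    simp only [pow_zero, mul_one, Nat.factorial_zero, Nat.cast_one, pow_one]
    have key := MeasureTheory.integral_Ioi_of_hasDerivAt_of_tendsto
      (f := fun y : ℝ => -lam⁻¹ * Complex.exp (-lam * y))
      (f' := fun x : ℝ => Complex.exp (-lam * x)) (a := 0) (m := 0)
      (Continuous.continuousWithinAt (by continuity)) ?_ ?_ ?_
    · rw [key]; simp [hlam, one_div]
    · intro x hx
      have h := (hasDerivAt_cexp_real lam x).const_mul (-lam⁻¹)
      exact h.congr_deriv (by linear_combination (Complex.exp (-lam * x)) * inv_mul_cancel₀ hlam)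
    · simpa using integrableOn_cexp_pow lam hre 0
    · have := (tendsto_cexp_pow lam hre 0).const_mul (-lam⁻¹)
      simpa using this
  | succ k ih =>
    have key := MeasureTheory.integral_Ioi_of_hasDerivAt_of_tendsto
      (f := fun y : ℝ => -lam⁻¹ * (Complex.exp (-lam * y) * (y:ℂ) ^ (k+1)))
      (f' := fun x : ℝ => Complex.exp (-lam * x) * (x:ℂ) ^ (k+1)
        - ((k:ℂ)+1) / lam * (Complex.exp (-lam * x) * (x:ℂ) ^ k)) (a := 0) (m := 0)
      (Continuous.continuousWithinAt (by continuity)) (fun x _ => hasDerivAt_aux lam hlam k x)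
      ((integrableOn_cexp_pow lam hre (k+1)).sub ((integrableOn_cexp_pow lam hre k).const_mul _))
      (by simpa using (tendsto_cexp_pow lam hre (k+1)).const_mul (-lam⁻¹))
    rw [MeasureTheory.integral_sub (integrableOn_cexp_pow lam hre (k+1))
      ((integrableOn_cexp_pow lam hre k).const_mul _), MeasureTheory.integral_const_mul, ih] at key
    have h0 : (0:ℂ) - -lam⁻¹ * (Complex.exp (-lam * (0:ℝ)) * ((0:ℝ):ℂ) ^ (k+1)) = 0 := by simp
    rw [h0, sub_eq_zero] at key
    rw [key, Nat.factorial_succ, div_mul_div_comm]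
    push_cast
    rw [pow_succ]
    ring

/-- Laplace transform of a shifted real polynomial. -/
lemma laplace_poly (lam : ℂ) (hre : 0 < lam.re) (p : Polynomial ℝ) (t : ℝ) :
    ∫ σ in Ioi (0:ℝ), Complex.exp (-lam * σ) * ((p.eval (σ + t) : ℝ) : ℂ)
      = ∑ k ∈ Finset.range (p.natDegree + 1),
          (((Polynomial.derivative^[k] p).eval t : ℝ) : ℂ) / lam ^ (k+1) := by
  have hexp : ∀ σ : ℝ, p.eval (σ + t)
      = ∑ k ∈ Finset.range (p.natDegree + 1), ((Polynomial.taylor t p).coeff k) * σ ^ k := by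
    intro σ
    rw [← Polynomial.taylor_eval t p σ, Polynomial.eval_eq_sum_range, Polynomial.natDegree_taylor]
  calc ∫ σ in Ioi (0:ℝ), Complex.exp (-lam * σ) * ((p.eval (σ + t) : ℝ) : ℂ)
      = ∫ σ in Ioi (0:ℝ), ∑ k ∈ Finset.range (p.natDegree + 1),
          (((Polynomial.taylor t p).coeff k : ℝ) : ℂ) * (Complex.exp (-lam * σ) * (σ:ℂ) ^ k) := by
        apply setIntegral_congr_fun measurableSet_Ioi
        intro σ _
        simp only []
        rw [hexp σ]
        push_cast
        rw [Finset.mul_sum]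
        apply Finset.sum_congr rfl
        intro k _
        ring
    _ = ∑ k ∈ Finset.range (p.natDegree + 1),
          (((Polynomial.taylor t p).coeff k : ℝ) : ℂ) * ((k.factorial : ℂ) / lam ^ (k+1)) := by
        rw [MeasureTheory.integral_finset_sum]
        · exact Finset.sum_congr rfl fun k _ => by
            rw [MeasureTheory.integral_const_mul, integral_cexp_pow lam hre k]
        · exact fun k _ => (integrableOn_cexp_pow lam hre k).const_mul _
    _ = _ := by
        apply Finset.sum_congr rfl
        intro k _
        have hd : (Polynomial.derivative^[k] p).eval t
            = (k.factorial : ℝ) * ((Polynomial.taylor t p).coeff k) := by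
          rw [← Polynomial.factorial_smul_hasseDeriv k]
          simp only [LinearMap.smul_apply, Polynomial.eval_smul, nsmul_eq_mul,
            Polynomial.taylor_coeff]
          norm_num
        rw [hd]
        push_cast
        ring

end AuxStab
section AuxStab2
open Polynomial MeasureTheory Set Filter

/-- `π` mapped to `ℂ`. -/
noncomputable def piCC (s : ℕ) (c : Fin s → ℝ) : Polynomial ℂ :=
  (piPoly s c).map (algebraMap ℝ ℂ)

lemma monic_piPoly (s : ℕ) (c : Fin s → ℝ) : (piPoly s c).Monic :=
  monic_prod_of_monic _ _ fun i _ => monic_X_sub_C _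

lemma natDegree_piPoly (s : ℕ) (c : Fin s → ℝ) : (piPoly s c).natDegree = s := by
  rw [piPoly, natDegree_prod_of_monic _ _ (fun i _ => monic_X_sub_C _)]
  simp

lemma natDegree_piCC (s : ℕ) (c : Fin s → ℝ) : (piCC s c).natDegree = s := by
  rw [piCC, (monic_piPoly s c).natDegree_map, natDegree_piPoly]

lemma eval_piCC (s : ℕ) (c : Fin s → ℝ) (x : ℝ) :
    (piCC s c).eval ((x:ℂ)) = (((piPoly s c).eval x : ℝ) : ℂ) := by
  rw [piCC, show ((x:ℂ)) = algebraMap ℝ ℂ x from rfl, Polynomial.eval_map, Polynomial.eval₂_hom]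
  rfl

lemma piCC_root (s : ℕ) (c : Fin s → ℝ) (i : Fin s) : (piCC s c).eval ((c i : ℂ)) = 0 := by
  rw [eval_piCC]
  simp [piPoly, Polynomial.eval_prod, Finset.prod_eq_zero (Finset.mem_univ i)]

/-- The polynomial `Q(t) = Σ_{k=0}^{s} π^{(k)}(t)/λ^{k+1}` (over `ℂ`). -/
noncomputable def Qpoly (s : ℕ) (c : Fin s → ℝ) (lam : ℂ) : Polynomial ℂ :=
  ∑ k ∈ Finset.range (s+1), (lam ^ (k+1))⁻¹ • Polynomial.derivative^[k] (piCC s c)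

lemma eval_Qpoly (s : ℕ) (c : Fin s → ℝ) (lam : ℂ) (x : ℂ) :
    (Qpoly s c lam).eval x
      = ∑ k ∈ Finset.range (s+1), ((Polynomial.derivative^[k] (piCC s c)).eval x) / lam ^ (k+1) := by
  rw [Qpoly, Polynomial.eval_finset_sum]
  exact Finset.sum_congr rfl fun k _ => by rw [Polynomial.eval_smul, smul_eq_mul, div_eq_mul_inv, mul_comm]

lemma natDegree_Qpoly_le (s : ℕ) (c : Fin s → ℝ) (lam : ℂ) : (Qpoly s c lam).natDegree ≤ s := by
  apply Polynomial.natDegree_sum_le_of_forall_le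
  intro k _
  exact le_trans (Polynomial.natDegree_smul_le _ _)
    (le_trans (Polynomial.natDegree_iterate_derivative _ _) (by rw [natDegree_piCC]; omega))

/-- Laplace transform of shifted `π` equals an evaluation of `Q`. -/
lemma laplace_piPoly_eq_Qpoly (s : ℕ) (c : Fin s → ℝ) (lam : ℂ) (hre : 0 < lam.re) (t : ℝ) :
    ∫ σ in Ioi (0:ℝ), Complex.exp (-lam * σ) * (((piPoly s c).eval (σ + t) : ℝ) : ℂ)
      = (Qpoly s c lam).eval ((t:ℂ)) := by
  rw [laplace_poly lam hre (piPoly s c) t, eval_Qpoly, natDegree_piPoly]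
  apply Finset.sum_congr rfl
  intro k _
  congr 1
  rw [piCC, Polynomial.iterate_derivative_map,
    show ((t:ℂ)) = algebraMap ℝ ℂ t from rfl, Polynomial.eval_map, Polynomial.eval₂_hom]
  rfl

/-- `Q' = λQ - π` at every point. -/
lemma deriv_Qpoly_eval (s : ℕ) (c : Fin s → ℝ) (lam : ℂ) (hlam : lam ≠ 0) (x : ℂ) :
    (Polynomial.derivative (Qpoly s c lam)).eval x
      = lam * (Qpoly s c lam).eval x - (piCC s c).eval x := by
  have hz : Polynomial.derivative^[s+1] (piCC s c) = 0 :=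
    Polynomial.iterate_derivative_eq_zero (by rw [natDegree_piCC]; omega)
  set a : ℕ → ℂ := fun k => (Polynomial.derivative^[k] (piCC s c)).eval x with ha
  have hL : (Polynomial.derivative (Qpoly s c lam)).eval x
      = ∑ k ∈ Finset.range (s+1), a (k+1) / lam ^ (k+1) := by
    rw [Qpoly, Polynomial.derivative_sum]
    rw [Polynomial.eval_finset_sum]
    apply Finset.sum_congr rfl
    intro k _
    rw [Polynomial.derivative_smul, Polynomial.eval_smul, smul_eq_mul, ha]
    rw [← Function.iterate_succ_apply' Polynomial.derivative]
    rw [div_eq_mul_inv, mul_comm]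
  have hR : lam * (Qpoly s c lam).eval x - (piCC s c).eval x
      = ∑ k ∈ Finset.range s, a (k+1) / lam ^ (k+1) := by
    rw [eval_Qpoly, Finset.mul_sum]
    have : ∀ k, lam * (a k / lam ^ (k+1)) = a k / lam ^ k := by
      intro k
      rw [pow_succ]
      field_simp
    rw [Finset.sum_congr rfl (fun k _ => this k), Finset.sum_range_succ']
    simp only [pow_zero, div_one]
    have : a 0 = (piCC s c).eval x := rfl
    rw [this]
    ring
  rw [hL, hR, Finset.sum_range_succ]
  have : a (s+1) = 0 := by rw [ha]; simp only [hz]; simp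
  rw [this]
  simp

end AuxStab2
section AuxStab3
open Polynomial MeasureTheory Set Filter

lemma lagrangeFun_eq_eval_basis {s : ℕ} {c : Fin s → ℝ} (j : Fin s) (t : ℝ) :
    lagrangeFun s c j t = (Lagrange.basis Finset.univ c j).eval t := by
  rw [Lagrange.basis, Polynomial.eval_prod, lagrangeFun]
  apply Finset.prod_congr rfl
  intro k _
  rw [Lagrange.basisDivisor]
  simp [div_eq_mul_inv, mul_comm]

lemma eval_map_ofReal (q : Polynomial ℝ) (x : ℝ) :
    (q.map (algebraMap ℝ ℂ)).eval ((x:ℂ)) = ((q.eval x : ℝ) : ℂ) := by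
  rw [show ((x:ℂ)) = algebraMap ℝ ℂ x from rfl, Polynomial.eval_map, Polynomial.eval₂_hom]
  rfl

/-- Specific antiderivative of a real polynomial. -/
noncomputable def antider (p : Polynomial ℝ) : Polynomial ℝ :=
  ∑ k ∈ Finset.range (p.natDegree + 1), Polynomial.monomial (k+1) (p.coeff k / (k+1))

lemma derivative_antider (p : Polynomial ℝ) : Polynomial.derivative (antider p) = p := by
  rw [antider, Polynomial.derivative_sum]
  conv_rhs => rw [p.as_sum_range' (p.natDegree+1) (lt_add_one _)]
  apply Finset.sum_congr rfl
  intro k _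
  rw [Polynomial.derivative_monomial]
  have h1 : (k+1) - 1 = k := rfl
  rw [h1]
  congr 1
  have : ((k:ℝ)+1) ≠ 0 := by positivity
  push_cast
  field_simp

lemma integral_eval_poly (p : Polynomial ℝ) (a b : ℝ) :
    ∫ t in a..b, p.eval t = (antider p).eval b - (antider p).eval a := by
  apply intervalIntegral.integral_eq_sub_of_hasDerivAt (f := fun x => (antider p).eval x)
  · intro x _
    have := (antider p).hasDerivAt x
    rwa [derivative_antider] at this
  · exact (p.continuous_aeval.intervalIntegrable a b)

lemma collocA_eq_antider {s : ℕ} (c : Fin s → ℝ) (i j : Fin s) :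
    collocA s c i j = (antider (Lagrange.basis Finset.univ c j)).eval (c i)
      - (antider (Lagrange.basis Finset.univ c j)).eval 0 := by
  rw [collocA]
  show (∫ t in (0:ℝ)..(c i), lagrangeFun s c j t) = _
  rw [intervalIntegral.integral_congr (g := fun t => (Lagrange.basis Finset.univ c j).eval t)
    (fun t _ => lagrangeFun_eq_eval_basis j t), integral_eval_poly]

lemma collocB_eq_antider {s : ℕ} (c : Fin s → ℝ) (i : Fin s) :
    collocB s c i = (antider (Lagrange.basis Finset.univ c i)).eval 1
      - (antider (Lagrange.basis Finset.univ c i)).eval 0 := by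
  rw [collocB]
  show (∫ t in (0:ℝ)..(1:ℝ), lagrangeFun s c i t) = _
  rw [intervalIntegral.integral_congr (g := fun t => (Lagrange.basis Finset.univ c i).eval t)
    (fun t _ => lagrangeFun_eq_eval_basis i t), integral_eval_poly]

lemma basis_map {s : ℕ} (c : Fin s → ℝ) (j : Fin s) :
    (Lagrange.basis Finset.univ c j).map (algebraMap ℝ ℂ)
      = Lagrange.basis Finset.univ (fun i => ((c i : ℂ))) j := by
  rw [Lagrange.basis, Polynomial.map_prod, Lagrange.basis]
  apply Finset.prod_congr rfl
  intro k _
  rw [Lagrange.basisDivisor, Lagrange.basisDivisor]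
  rw [Polynomial.map_mul, Polynomial.map_sub, Polynomial.map_C, Polynomial.map_X, map_inv₀,
    map_sub]
  norm_num

/-- Interpolation: polynomials of degree `< s` are reproduced by the Lagrange basis at `(c_j)`. -/
lemma interpolate_eq_self {s : ℕ} {c : Fin s → ℝ} (hc : StrictMono c) (p : Polynomial ℂ)
    (hdeg : p.natDegree < s) :
    ∑ j : Fin s, Polynomial.C (p.eval ((c j : ℂ))) * Lagrange.basis Finset.univ (fun i => ((c i : ℂ))) j = p := by
  have hinj : Set.InjOn (fun i : Fin s => ((c i : ℂ))) ↑(Finset.univ : Finset (Fin s)) := by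
    intro a _ b _ h
    exact hc.injective (Complex.ofReal_injective (by simpa using h))
  have hdeg' : p.degree < (Finset.univ : Finset (Fin s)).card := by
    rw [Finset.card_univ, Fintype.card_fin]
    exact lt_of_le_of_lt Polynomial.degree_le_natDegree (by exact_mod_cast hdeg)
  have := Lagrange.eq_interpolate hinj hdeg'
  rw [Lagrange.interpolate_apply] at this
  exact this.symm

/-- Quadrature exactness for weights given by antiderivative differences. -/
lemma quad_exact {s : ℕ} {c : Fin s → ℝ} (hc : StrictMono c) (p P : Polynomial ℂ)
    (hdeg : p.natDegree < s) (hP : Polynomial.derivative P = p) (x : ℝ) :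
    ∑ j : Fin s, (((antider (Lagrange.basis Finset.univ c j)).eval x
        - (antider (Lagrange.basis Finset.univ c j)).eval 0 : ℝ) : ℂ) * p.eval ((c j : ℂ))
      = P.eval ((x:ℂ)) - P.eval 0 := by
  set G : Polynomial ℂ := ∑ j : Fin s, Polynomial.C (p.eval ((c j : ℂ)))
      * ((antider (Lagrange.basis Finset.univ c j)).map (algebraMap ℝ ℂ)) with hG
  have hG' : Polynomial.derivative G = p := by
    rw [hG, Polynomial.derivative_sum]
    have : ∀ j : Fin s, Polynomial.derivative (Polynomial.C (p.eval ((c j : ℂ)))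
        * ((antider (Lagrange.basis Finset.univ c j)).map (algebraMap ℝ ℂ)))
        = Polynomial.C (p.eval ((c j : ℂ))) * Lagrange.basis Finset.univ (fun i => ((c i : ℂ))) j := by
      intro j
      rw [Polynomial.derivative_C_mul, Polynomial.derivative_map, derivative_antider, basis_map]
    rw [Finset.sum_congr rfl (fun j _ => this j)]
    exact interpolate_eq_self hc p hdeg
  -- G - P is constant
  have hconst : Polynomial.derivative (G - P) = 0 := by
    rw [Polynomial.derivative_sub, hG', hP, sub_self]
  have hC := Polynomial.eq_C_of_derivative_eq_zero hconst
  have hdiff : ∀ y z : ℂ, P.eval y - P.eval z = G.eval y - G.eval z := by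
    intro y z
    have h1 : G.eval y - P.eval y = G.eval z - P.eval z := by
      have hy := congrArg (Polynomial.eval y) hC
      have hz := congrArg (Polynomial.eval z) hC
      simp only [Polynomial.eval_sub, Polynomial.eval_C] at hy hz
      rw [hy, hz]
    linear_combination -h1
  have h0 : (0:ℂ) = (((0:ℝ)):ℂ) := by norm_num
  rw [hdiff ((x:ℂ)) 0, hG, Polynomial.eval_finset_sum, h0, Polynomial.eval_finset_sum,
    ← Finset.sum_sub_distrib]
  apply Finset.sum_congr rfl
  intro j _
  rw [Polynomial.eval_mul, Polynomial.eval_mul, Polynomial.eval_C, eval_map_ofReal, eval_map_ofReal, Polynomial.eval_C]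
  push_cast
  ring

end AuxStab3
/-- Laplace representation of the stability function:
`R(λ) = (∫_0^∞ e^{-λσ} π(σ+1) dσ) / (∫_0^∞ e^{-λσ} π(σ) dσ)` for `Re λ > 0`. -/
theorem stabR_eq_laplace_ratio (s : ℕ) (hs : 1 ≤ s) (c : Fin s → ℝ) (hc : StrictMono c)
    (lam : ℂ) (hre : 0 < lam.re)
    (hinv : IsUnit (1 - lam • collocAC s c).det)
    (hden : (∫ σ in Set.Ioi (0:ℝ), Complex.exp (-lam * σ) * (((piPoly s c).eval σ : ℝ) : ℂ)) ≠ 0) :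
    stabR s c lam =
      (∫ σ in Set.Ioi (0:ℝ), Complex.exp (-lam * σ) * (((piPoly s c).eval (σ + 1) : ℝ) : ℂ)) /
      (∫ σ in Set.Ioi (0:ℝ), Complex.exp (-lam * σ) * (((piPoly s c).eval σ : ℝ) : ℂ)) := by
  classical
  have hlam : lam ≠ 0 := fun h => by simp [h] at hre
  set Q := Qpoly s c lam with hQdef
  have hnum : (∫ σ in Set.Ioi (0:ℝ), Complex.exp (-lam * σ) * (((piPoly s c).eval (σ + 1) : ℝ) : ℂ))
      = Q.eval (((1:ℝ):ℂ)) := laplace_piPoly_eq_Qpoly s c lam hre 1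
  have hden' : (∫ σ in Set.Ioi (0:ℝ), Complex.exp (-lam * σ) * (((piPoly s c).eval σ : ℝ) : ℂ))
      = Q.eval (((0:ℝ):ℂ)) := by
    have := laplace_piPoly_eq_Qpoly s c lam hre 0
    simpa using this
  have h00 : (((0:ℝ):ℂ)) = 0 := by norm_num
  have hQ0 : Q.eval 0 ≠ 0 := by rw [← h00, ← hden']; exact hden
  have hroot : ∀ i : Fin s, (Polynomial.derivative Q).eval ((c i : ℂ))
      = lam * Q.eval ((c i : ℂ)) := by
    intro i
    rw [hQdef, deriv_Qpoly_eval s c lam hlam, piCC_root]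
    ring
  have hp : (Polynomial.derivative Q).natDegree < s := by
    have h1 := Polynomial.natDegree_derivative_le Q
    have h2 := natDegree_Qpoly_le s c lam
    rw [← hQdef] at h2
    omega
  have hA : ∀ i : Fin s, ∑ j : Fin s, ((collocA s c i j : ℝ) : ℂ)
        * (Polynomial.derivative Q).eval ((c j : ℂ))
      = Q.eval ((c i : ℂ)) - Q.eval 0 := by
    intro i
    have key := quad_exact hc (Polynomial.derivative Q) Q hp rfl (c i)
    rw [← key]
    apply Finset.sum_congr rfl
    intro j _
    rw [collocA_eq_antider c i j]
  have hB : ∑ i : Fin s, ((collocB s c i : ℝ) : ℂ)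
        * (Polynomial.derivative Q).eval ((c i : ℂ))
      = Q.eval (((1:ℝ):ℂ)) - Q.eval 0 := by
    have key := quad_exact hc (Polynomial.derivative Q) Q hp rfl 1
    rw [← key]
    apply Finset.sum_congr rfl
    intro i _
    rw [collocB_eq_antider c i]
  set g : Fin s → ℂ := fun i => Q.eval ((c i : ℂ)) / Q.eval 0 with hg
  have hMg : (1 - lam • collocAC s c) *ᵥ g = (fun _ => 1) := by
    funext i
    rw [Matrix.sub_mulVec, Matrix.smul_mulVec, Matrix.one_mulVec]
    show g i - lam * ((collocAC s c *ᵥ g) i) = 1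
    have hAg : (collocAC s c *ᵥ g) i = ∑ j : Fin s, ((collocA s c i j : ℝ) : ℂ) * g j := rfl
    have hsum : lam * ((collocAC s c *ᵥ g) i) = (Q.eval ((c i : ℂ)) - Q.eval 0) / Q.eval 0 := by
      rw [hAg, Finset.mul_sum]
      rw [show ∑ j : Fin s, lam * (((collocA s c i j : ℝ) : ℂ) * g j)
          = (∑ j : Fin s, ((collocA s c i j : ℝ) : ℂ)
              * (Polynomial.derivative Q).eval ((c j : ℂ))) / Q.eval 0 from ?_]
      · rw [hA i]
      · rw [Finset.sum_div]
        apply Finset.sum_congr rfl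
        intro j _
        rw [hroot j, hg]
        field_simp
    rw [hsum, hg]
    field_simp
    ring
  have hginv : (1 - lam • collocAC s c)⁻¹ *ᵥ (fun _ => 1) = g := by
    rw [← hMg, Matrix.mulVec_mulVec, Matrix.nonsing_inv_mul _ hinv, Matrix.one_mulVec]
  have hdot : lam * (collocBC s c ⬝ᵥ g) = (Q.eval (((1:ℝ):ℂ)) - Q.eval 0) / Q.eval 0 := by
    have hdd : collocBC s c ⬝ᵥ g = ∑ i : Fin s, ((collocB s c i : ℝ) : ℂ) * g i := rfl
    rw [hdd, Finset.mul_sum, ← hB, Finset.sum_div]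
    apply Finset.sum_congr rfl
    intro i _
    rw [hroot i, hg]
    field_simp
  have h11 : (((1:ℝ):ℂ)) = 1 := by norm_num
  have hstab : stabR s c lam
      = 1 + lam * (collocBC s c ⬝ᵥ ((1 - lam • collocAC s c)⁻¹ *ᵥ (fun _ => 1))) := rfl
  rw [hstab, hginv, hnum, hden', hdot, h00, h11]
  field_simp
  ring
end
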